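/- arXiv:0907.4217 — 2 statements merged into one kernel-verified Lean document; each statement's English description precedes it below -/
import Mathlib

section
/- Let max_ε be a regularized maximum, A a smooth real (1,1)-form (equivalently, a Hermitian-matrix-valued smooth function), and u, v smooth real functions on Ω ⊆ ℂⁿ such that A + dd^c u ≥ 0 and A + dd^c v ≥ 0 (positive semidefinite complex Hessians). Then A + dd^c max_ε(u, v) ≥ 0. -/
open ComplexConjugate

/-- A convex function on `ℝ` that is bounded above is constant. -/
lemma convexOn_bddAbove_const {f : ℝ → ℝ} (hf : ConvexOn ℝ Set.univ f) {C : ℝ}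
    (hC : ∀ t, f t ≤ C) : ∀ x y : ℝ, f x = f y := by
  have claim1 : ∀ x y : ℝ, x < y → f y ≤ f x := by
    intro x y hxy
    by_contra hlt
    push_neg at hlt
    have hd0 : 0 < f y - f x := sub_pos.2 hlt
    obtain ⟨z, hz⟩ : ∃ z : ℝ, z = y + (y - x) * (C - f y + 1) / (f y - f x) := ⟨_, rfl⟩
    have h1 : 0 < (y - x) * (C - f y + 1) / (f y - f x) :=
      div_pos (mul_pos (by linarith) (by linarith [hC y])) hd0
    have hyz : y < z := by rw [hz]; linarith
    have hs := hf.slope_mono_adjacent (Set.mem_univ x) (Set.mem_univ z) hxy hyz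
    rw [div_le_div_iff₀ (by linarith) (by linarith)] at hs
    have h2 : (f y - f x) * (z - y) = (y - x) * (C - f y + 1) := by
      rw [hz]; field_simp; ring
    have h3 : (C - f y + 1) * (y - x) ≤ (f z - f y) * (y - x) := by
      calc (C - f y + 1) * (y - x) = (f y - f x) * (z - y) := by rw [h2]; ring
        _ ≤ (f z - f y) * (y - x) := hs
    have h4 : C - f y + 1 ≤ f z - f y := le_of_mul_le_mul_right h3 (by linarith)
    linarith [hC z]
  have claim2 : ∀ x y : ℝ, x < y → f x ≤ f y := by
    intro x y hxy
    by_contra hlt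
    push_neg at hlt
    have hd0 : 0 < f x - f y := sub_pos.2 hlt
    obtain ⟨w, hw⟩ : ∃ w : ℝ, w = x - (y - x) * (C - f x + 1) / (f x - f y) := ⟨_, rfl⟩
    have h1 : 0 < (y - x) * (C - f x + 1) / (f x - f y) :=
      div_pos (mul_pos (by linarith) (by linarith [hC x])) hd0
    have hwx : w < x := by rw [hw]; linarith
    have hs := hf.slope_mono_adjacent (Set.mem_univ w) (Set.mem_univ y) hwx hxy
    rw [div_le_div_iff₀ (by linarith) (by linarith)] at hs
    have h2 : (f x - f y) * (x - w) = (y - x) * (C - f x + 1) := by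
      rw [hw]; field_simp; ring
    have h3 : (f x - f w) * (y - x) ≤ (-(C - f x + 1)) * (y - x) := by
      calc (f x - f w) * (y - x) ≤ (f y - f x) * (x - w) := hs
        _ = -((f x - f y) * (x - w)) := by ring
        _ = (-(C - f x + 1)) * (y - x) := by rw [h2]; ring
    have h4 : f x - f w ≤ -(C - f x + 1) := le_of_mul_le_mul_right h3 (by linarith)
    linarith [hC w]
  intro x y
  rcases lt_trichotomy x y with h | h | h
  · exact le_antisymm (claim2 x y h) (claim1 x y h)
  · rw [h]
  · exact (le_antisymm (claim2 y x h) (claim1 y x h)).symm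

/-- Supporting-hyperplane inequality for a differentiable convex function. -/
lemma fderiv_support {F : ℝ × ℝ → ℝ} (hF : ContDiff ℝ (⊤ : ℕ∞) F)
    (hconv : ConvexOn ℝ Set.univ F) (p₀ q : ℝ × ℝ) :
    F p₀ + fderiv ℝ F p₀ q ≤ F (p₀ + q) := by
  have hcurve : HasDerivAt (fun t : ℝ => p₀ + t • q) q 0 := by
    simpa using ((hasDerivAt_id (0:ℝ)).smul_const q).const_add p₀
  have hFd : HasFDerivAt F (fderiv ℝ F p₀) ((fun t : ℝ => p₀ + t • q) 0) := by
    simpa using (hF.differentiable (by simp) p₀).hasFDerivAt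
  have hφ : HasDerivAt (fun t : ℝ => F (p₀ + t • q)) (fderiv ℝ F p₀ q) 0 :=
    hFd.comp_hasDerivAt 0 hcurve
  have hφconv : ConvexOn ℝ Set.univ fun t : ℝ => F (p₀ + t • q) := by
    have h := hconv.comp_affineMap (AffineMap.lineMap p₀ (p₀ + q) : ℝ →ᵃ[ℝ] ℝ × ℝ)
    simp only [Set.preimage_univ] at h
    convert h using 1
    rfl
    rfl
    rfl
    rfl
    funext t
    simp only [Function.comp_apply, AffineMap.lineMap_apply_module]
    congr 1
    module
  have := hφconv.le_slope_of_hasDerivAt (Set.mem_univ (0:ℝ)) (Set.mem_univ (1:ℝ)) one_pos hφ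
  rw [slope_def_field] at this
  simp only [zero_smul, add_zero, one_smul] at this
  nlinarith [this]

/-- Second-derivative test at an interior minimum. -/
lemma second_deriv_nonneg_of_min {f : ℝ → ℝ} {s : Set ℝ} (hs : IsOpen s) (h0 : 0 ∈ s)
    (hf : ContDiffOn ℝ (⊤ : ℕ∞) f s) (hmin : ∀ t ∈ s, f 0 ≤ f t) :
    0 ≤ deriv (deriv f) 0 := by
  by_contra hneg
  push_neg at hneg
  obtain ⟨δ, hδ0, hδ⟩ := Metric.isOpen_iff.1 hs 0 h0
  have hdf : ContDiffOn ℝ (⊤ : ℕ∞) (deriv f) s := hf.deriv_of_isOpen hs (by simp)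
  have hdfat : DifferentiableAt ℝ (deriv f) 0 :=
    ((hdf.differentiableOn (by simp)) 0 h0).differentiableAt (hs.mem_nhds h0)
  have hloc : IsLocalMin f 0 := Filter.eventually_of_mem (hs.mem_nhds h0) hmin
  have hd0 : deriv f 0 = 0 := hloc.deriv_eq_zero
  have htend : Filter.Tendsto (slope (deriv f) 0) (nhdsWithin 0 {(0:ℝ)}ᶜ)
      (nhds (deriv (deriv f) 0)) := hasDerivAt_iff_tendsto_slope.1 hdfat.hasDerivAt
  have htend' : Filter.Tendsto (slope (deriv f) 0) (nhdsWithin 0 (Set.Ioi 0))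
      (nhds (deriv (deriv f) 0)) :=
    htend.mono_left (nhdsWithin_mono 0 (fun x hx => ne_of_gt hx))
  have hev : ∀ᶠ t in nhdsWithin 0 (Set.Ioi 0), slope (deriv f) 0 t < 0 :=
    htend' (Iio_mem_nhds hneg)
  obtain ⟨δ', hδ'mem, hδ'sub⟩ := mem_nhdsGT_iff_exists_Ioo_subset.1 hev
  have hδ'0 : 0 < δ' := hδ'mem
  obtain ⟨c, hc⟩ : ∃ c : ℝ, c = min δ' δ / 2 := ⟨_, rfl⟩
  have hc0 : 0 < c := by rw [hc]; positivity
  have hcδ : c < δ := by rw [hc]; have := min_le_right δ' δ; linarith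
  have hcδ' : c < δ' := by rw [hc]; have := min_le_left δ' δ; linarith
  have hIcc : Set.Icc (0:ℝ) c ⊆ s := by
    intro t ht
    apply hδ
    simp only [Metric.mem_ball, Real.dist_eq, sub_zero]
    rw [abs_of_nonneg ht.1]; linarith [ht.2]
  have hanti : StrictAntiOn f (Set.Icc 0 c) := by
    apply strictAntiOn_of_deriv_neg (convex_Icc 0 c) ((hf.continuousOn).mono hIcc)
    intro t ht
    rw [interior_Icc] at ht
    have hts : t ∈ Set.Ioo 0 δ' := ⟨ht.1, lt_trans ht.2 hcδ'⟩
    have := hδ'sub hts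
    rw [Set.mem_setOf_eq, slope_def_field, hd0] at this
    have htpos : 0 < t := ht.1
    calc deriv f t = (deriv f t - 0) / (t - 0) * t := by rw [sub_zero, sub_zero, div_mul_cancel₀ _ htpos.ne']
      _ < 0 := mul_neg_of_neg_of_pos this htpos
  have := hanti (Set.left_mem_Icc.2 hc0.le) (Set.right_mem_Icc.2 hc0.le) hc0
  have := hmin c (hIcc (Set.right_mem_Icc.2 hc0.le))
  linarith

lemma deriv2_decomp {h U V : ℝ → ℝ} {s : Set ℝ} (hs : IsOpen s) (h0 : 0 ∈ s)
    (hh : ContDiffOn ℝ (⊤ : ℕ∞) h s) (hU : ContDiffOn ℝ (⊤ : ℕ∞) U s)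
    (hV : ContDiffOn ℝ (⊤ : ℕ∞) V s) (a b c : ℝ) :
    deriv (deriv (fun t => h t + (a * U t + b * V t + c))) 0
      = deriv (deriv h) 0 + (a * deriv (deriv U) 0 + b * deriv (deriv V) 0) := by
  have dAt : ∀ g : ℝ → ℝ, ContDiffOn ℝ (⊤ : ℕ∞) g s → ∀ t ∈ s, DifferentiableAt ℝ g t :=
    fun g hg t ht => ((hg.differentiableOn (by simp)) t ht).differentiableAt (hs.mem_nhds ht)
  have ev : (deriv fun t => h t + (a * U t + b * V t + c))
      =ᶠ[nhds 0] fun t => deriv h t + (a * deriv U t + b * deriv V t) := by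
    filter_upwards [hs.mem_nhds h0] with t ht
    exact ((dAt h hh t ht).hasDerivAt.add
      ((((dAt U hU t ht).hasDerivAt.const_mul a).add
        ((dAt V hV t ht).hasDerivAt.const_mul b)).add_const c)).deriv
  rw [ev.deriv_eq]
  exact ((dAt (deriv h) (hh.deriv_of_isOpen hs (by simp)) 0 h0).hasDerivAt.add
    (((dAt (deriv U) (hU.deriv_of_isOpen hs (by simp)) 0 h0).hasDerivAt.const_mul a).add
      ((dAt (deriv V) (hV.deriv_of_isOpen hs (by simp)) 0 h0).hasDerivAt.const_mul b))).deriv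


/-- The complex Laplacian of `u` at `z` in the complex direction `w`: up to a positive
constant, this is the evaluation `dd^c u (z)(w, w̄)` of the complex Hessian of `u` on
the direction `w`. -/
noncomputable def ddcDir {n : ℕ} (u : (Fin n → ℂ) → ℝ) (z w : Fin n → ℂ) : ℝ :=
  deriv (deriv fun t : ℝ => u (z + (t : ℂ) • w)) 0 +
  deriv (deriv fun t : ℝ => u (z + ((t : ℂ) * Complex.I) • w)) 0

/-- Evaluation of the Hermitian-matrix-valued function `A` (a smooth real `(1,1)`-form)
on the direction `w`: the real number `w̄ᵗ A(z) w`. -/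
noncomputable def hermEval {n : ℕ} (A : (Fin n → ℂ) → Matrix (Fin n) (Fin n) ℂ)
    (z : Fin n → ℂ) (w : Fin n → ℂ) : ℝ :=
  (∑ i : Fin n, ∑ j : Fin n, conj (w i) * A z i j * w j).re

/-- **Demailly's lemma: the regularized maximum preserves `A`-plurisubharmonicity.**
If `A` is a smooth Hermitian-matrix-valued function (a smooth real `(1,1)`-form) and
`u, v` are smooth real functions on an open `Ω ⊆ ℂⁿ` with `A + dd^c u ≥ 0` and
`A + dd^c v ≥ 0` pointwise as Hermitian forms, then `A + dd^c max_ε(u, v) ≥ 0`. -/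
theorem regularized_max_A_psh {n : ℕ} (Ω : Set (Fin n → ℂ)) (hΩ : IsOpen Ω)
    (ε : ℝ) (hε : 0 < ε) (maxe : ℝ → ℝ → ℝ)
    (hsmooth : ContDiff ℝ (⊤ : ℕ∞) fun p : ℝ × ℝ => maxe p.1 p.2)
    (hconv : ConvexOn ℝ Set.univ fun p : ℝ × ℝ => maxe p.1 p.2)
    (hmono1 : ∀ y : ℝ, Monotone fun x => maxe x y)
    (hmono2 : ∀ x : ℝ, Monotone fun y => maxe x y)
    (hmax : ∀ x y : ℝ, ε < |x - y| → maxe x y = max x y)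
    (A : (Fin n → ℂ) → Matrix (Fin n) (Fin n) ℂ)
    (hAsmooth : ∀ i j : Fin n, ContDiffOn ℝ (⊤ : ℕ∞) (fun z => A z i j) Ω)
    (hAherm : ∀ z i j, A z j i = conj (A z i j))
    (u v : (Fin n → ℂ) → ℝ)
    (hu : ContDiffOn ℝ (⊤ : ℕ∞) u Ω) (hv : ContDiffOn ℝ (⊤ : ℕ∞) v Ω)
    (hupos : ∀ z ∈ Ω, ∀ w : Fin n → ℂ, 0 ≤ hermEval A z w + ddcDir u z w)
    (hvpos : ∀ z ∈ Ω, ∀ w : Fin n → ℂ, 0 ≤ hermEval A z w + ddcDir v z w) :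
    ∀ z ∈ Ω, ∀ w : Fin n → ℂ,
      0 ≤ hermEval A z w + ddcDir (fun z => maxe (u z) (v z)) z w := by
  intro z hz w
  obtain ⟨x₀, hx₀⟩ : ∃ x₀ : ℝ, x₀ = u z := ⟨_, rfl⟩
  obtain ⟨y₀, hy₀⟩ : ∃ y₀ : ℝ, y₀ = v z := ⟨_, rfl⟩
  obtain ⟨L, hL⟩ : ∃ L, L = fderiv ℝ (fun p : ℝ × ℝ => maxe p.1 p.2) (x₀, y₀) := ⟨_, rfl⟩
  obtain ⟨a, haeq⟩ : ∃ a : ℝ, a = L ((1:ℝ), (0:ℝ)) := ⟨_, rfl⟩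
  obtain ⟨b, hbeq⟩ : ∃ b : ℝ, b = L ((0:ℝ), (1:ℝ)) := ⟨_, rfl⟩
  have dir : ∀ q : ℝ × ℝ, maxe x₀ y₀ + L q ≤ maxe ((x₀, y₀) + q).1 ((x₀, y₀) + q).2 := by
    intro q
    have := fderiv_support hsmooth hconv (x₀, y₀) q
    rw [← hL] at this
    exact this
  have Lq : ∀ s t : ℝ, L (s, t) = s * a + t * b := by
    intro s t
    have hq : ((s, t) : ℝ × ℝ) = s • ((1:ℝ), (0:ℝ)) + t • ((0:ℝ), (1:ℝ)) := by
      simp [Prod.ext_iff]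
    rw [hq, map_add, map_smul, map_smul, haeq, hbeq, smul_eq_mul, smul_eq_mul]
  have supp : ∀ x y : ℝ, maxe x₀ y₀ + (a * (x - x₀) + b * (y - y₀)) ≤ maxe x y := by
    intro x y
    have h := dir (x - x₀, y - y₀)
    rw [Lq] at h
    simp only [Prod.mk_add_mk, add_sub_cancel] at h
    linarith
  have ha : 0 ≤ a := by
    have h := dir (-1, 0)
    rw [Lq] at h
    simp only [Prod.mk_add_mk, add_zero] at h
    have h2 : maxe (x₀ + -1) y₀ ≤ maxe x₀ y₀ := hmono1 y₀ (by linarith)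
    linarith
  have hb : 0 ≤ b := by
    have h := dir (0, -1)
    rw [Lq] at h
    simp only [Prod.mk_add_mk, add_zero] at h
    have h2 : maxe x₀ (y₀ + -1) ≤ maxe x₀ y₀ := hmono2 x₀ (by linarith)
    linarith
  have hub : ∀ x y : ℝ, maxe x y ≤ max x y + 2 * ε := by
    intro x y
    have h1 : maxe x y ≤ maxe (max x y + 2 * ε) y :=
      hmono1 y (by linarith [le_max_left x y])
    have h2 : maxe (max x y + 2 * ε) y ≤ maxe (max x y + 2 * ε) (max x y) :=
      hmono2 _ (le_max_right x y)
    have h3 : maxe (max x y + 2 * ε) (max x y) = max (max x y + 2 * ε) (max x y) := by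
      apply hmax
      rw [show max x y + 2 * ε - max x y = 2 * ε by ring, abs_of_pos (by linarith)]
      linarith
    have h4 : max (max x y + 2 * ε) (max x y) = max x y + 2 * ε :=
      max_eq_left (by linarith)
    linarith
  have gconv : ConvexOn ℝ Set.univ fun t : ℝ => maxe (x₀ + t) (y₀ + t) := by
    have h := hconv.comp_affineMap
      (AffineMap.lineMap ((x₀, y₀) : ℝ × ℝ) ((x₀ + 1, y₀ + 1) : ℝ × ℝ) : ℝ →ᵃ[ℝ] ℝ × ℝ)
    simp only [Set.preimage_univ] at h
    convert h using 1
    rfl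
    rfl
    rfl
    rfl
    funext t
    simp only [Function.comp_apply, AffineMap.lineMap_apply_module, Prod.smul_mk,
      Prod.mk_add_mk, smul_eq_mul]
    congr 1 <;> ring
  have hnegconv : ConvexOn ℝ Set.univ fun t : ℝ => -t :=
    ⟨convex_univ, fun x _ y _ p q hp hq hpq => by
      simp only [smul_eq_mul]; exact le_of_eq (by ring)⟩
  have hGconv : ConvexOn ℝ Set.univ fun t : ℝ => maxe (x₀ + t) (y₀ + t) + -t :=
    gconv.add hnegconv
  have hGbdd : ∀ t : ℝ, maxe (x₀ + t) (y₀ + t) + -t ≤ max x₀ y₀ + 2 * ε := by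
    intro t
    have h := hub (x₀ + t) (y₀ + t)
    rw [max_add_add_right] at h
    linarith
  have hGconst := convexOn_bddAbove_const hGconv hGbdd
  have hg1 : maxe (x₀ + 1) (y₀ + 1) = maxe x₀ y₀ + 1 := by
    have h := hGconst 1 0
    simp only [add_zero, neg_zero] at h
    linarith
  have hgm1 : maxe (x₀ + -1) (y₀ + -1) = maxe x₀ y₀ - 1 := by
    have h := hGconst (-1) 0
    simp only [add_zero, neg_zero, neg_neg] at h
    linarith
  have hab : a + b = 1 := by
    have h1 := dir (1, 1)
    rw [Lq] at h1
    simp only [Prod.mk_add_mk] at h1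
    have h2 := dir (-1, -1)
    rw [Lq] at h2
    simp only [Prod.mk_add_mk] at h2
    rw [hg1] at h1
    rw [hgm1] at h2
    linarith
  -- per-direction second-derivative comparison
  have claim : ∀ w' : Fin n → ℂ,
      a * deriv (deriv fun t : ℝ => u (z + (t : ℂ) • w')) 0 +
        b * deriv (deriv fun t : ℝ => v (z + (t : ℂ) • w')) 0 ≤
      deriv (deriv fun t : ℝ => maxe (u (z + (t : ℂ) • w')) (v (z + (t : ℂ) • w'))) 0 := by
    intro w'
    have hγ : ContDiff ℝ (⊤ : ℕ∞) fun t : ℝ => z + (t : ℂ) • w' :=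
      contDiff_pi.2 fun i =>
        contDiff_const.add (Complex.ofRealCLM.contDiff.mul contDiff_const)
    obtain ⟨s, hsdef⟩ : ∃ s, s = (fun t : ℝ => z + (t : ℂ) • w') ⁻¹' Ω := ⟨_, rfl⟩
    have hsopen : IsOpen s := hsdef ▸ hΩ.preimage hγ.continuous
    have hγ0 : z + ((0:ℝ) : ℂ) • w' = z := by simp
    have h0s : 0 ∈ s := by rw [hsdef]; show z + ((0:ℝ) : ℂ) • w' ∈ Ω; rw [hγ0]; exact hz
    have hmaps : Set.MapsTo (fun t : ℝ => z + (t : ℂ) • w') s Ω := by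
      rw [hsdef]; exact fun t ht => ht
    have hU : ContDiffOn ℝ (⊤ : ℕ∞) (fun t : ℝ => u (z + (t : ℂ) • w')) s :=
      hu.comp hγ.contDiffOn hmaps
    have hV : ContDiffOn ℝ (⊤ : ℕ∞) (fun t : ℝ => v (z + (t : ℂ) • w')) s :=
      hv.comp hγ.contDiffOn hmaps
    have hF : ContDiffOn ℝ (⊤ : ℕ∞)
        (fun t : ℝ => maxe (u (z + (t : ℂ) • w')) (v (z + (t : ℂ) • w'))) s :=
      hsmooth.comp_contDiffOn (g := fun p : ℝ × ℝ => maxe p.1 p.2)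
        (f := fun t : ℝ => (u (z + (t : ℂ) • w'), v (z + (t : ℂ) • w'))) (hU.prodMk hV)
    obtain ⟨c, hcdef⟩ : ∃ c : ℝ, c = maxe x₀ y₀ - (a * x₀ + b * y₀) := ⟨_, rfl⟩
    obtain ⟨h, hhdef⟩ : ∃ h : ℝ → ℝ, h = fun t : ℝ =>
        maxe (u (z + (t : ℂ) • w')) (v (z + (t : ℂ) • w')) -
          (a * u (z + (t : ℂ) • w') + b * v (z + (t : ℂ) • w') + c) := ⟨_, rfl⟩
    have hh : ContDiffOn ℝ (⊤ : ℕ∞) h s := by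
      rw [hhdef]
      exact hF.sub (((contDiffOn_const.mul hU).add (contDiffOn_const.mul hV)).add
        contDiffOn_const)
    have hnn : ∀ t : ℝ, 0 ≤ h t := by
      intro t
      rw [hhdef]
      have := supp (u (z + (t : ℂ) • w')) (v (z + (t : ℂ) • w'))
      simp only [hcdef]
      linarith
    have h0eq : h 0 = 0 := by
      rw [hhdef]
      simp only [hγ0, ← hx₀, ← hy₀, hcdef]
      ring
    have hd2h : 0 ≤ deriv (deriv h) 0 :=
      second_deriv_nonneg_of_min hsopen h0s hh fun t ht => by rw [h0eq]; exact hnn t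
    have hFeq : (fun t : ℝ => maxe (u (z + (t : ℂ) • w')) (v (z + (t : ℂ) • w'))) =
        fun t : ℝ => h t + (a * u (z + (t : ℂ) • w') + b * v (z + (t : ℂ) • w') + c) := by
      funext t
      rw [hhdef]
      ring
    rw [hFeq, deriv2_decomp hsopen h0s hh hU hV a b c]
    linarith
  have hu' := hupos z hz w
  have hv' := hvpos z hz w
  simp only [ddcDir, mul_smul] at hu' hv' ⊢
  have c1 := claim w
  have c2 := claim (Complex.I • w)
  have hE : a * hermEval A z w + b * hermEval A z w = hermEval A z w := by
    rw [← add_mul, hab, one_mul]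
  have h1 := mul_nonneg ha hu'
  have h2 := mul_nonneg hb hv'
  nlinarith [h1, h2, hE, c1, c2]
end

section
/- Let q be a symmetric bilinear form on a real vector space, and suppose η ∈ V satisfies q(η, η) = 0. Then in the Fujiki-type symmetrized form F of degree 2n (the polarization of v ↦ q(v,v)ⁿ), for any ρ₁,...,ρ_{n-1} ∈ V, F(η,...,η (n+1 times), ρ₁, ..., ρ_{n-1}) = 0; and if additionally q(η, ρ) ≠ 0 for some ρ, then F(η,...,η (n times), ρ, ..., ρ (n times)) = q(η,ρ)ⁿ · n!·n!·2ⁿ/(2n)! ≠ 0. -/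
namespace ParabolicAux

variable {n : ℕ}

theorem lo_lt (k : Fin n) : 2*k.1 < 2*n := by have := k.2; omega
theorem hi_lt (k : Fin n) : 2*k.1+1 < 2*n := by have := k.2; omega
def lo (k : Fin n) : Fin (2*n) := ⟨2*k.1, lo_lt k⟩
def hi (k : Fin n) : Fin (2*n) := ⟨2*k.1+1, hi_lt k⟩

lemma sum_range_pair (f : ℕ → ℕ) (m : ℕ) :
    ∑ i ∈ Finset.range (2*m), f i = ∑ k ∈ Finset.range m, (f (2*k) + f (2*k+1)) := by
  induction m with
  | zero => simp
  | succ m ih =>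
    rw [show 2*(m+1) = (2*m)+1+1 by ring, Finset.sum_range_succ, Finset.sum_range_succ,
      Finset.sum_range_succ, ih]
    ring

lemma pair_count (σ : Equiv.Perm (Fin (2*n))) (P : Fin (2*n) → Prop) [DecidablePred P] :
    ∑ k : Fin n, ((if P (σ (lo k)) then 1 else 0) + (if P (σ (hi k)) then 1 else 0))
      = (Finset.univ.filter P).card := by
  classical
  set f : ℕ → ℕ := fun i => if h : i < 2*n then (if P (σ ⟨i, h⟩) then 1 else 0) else 0 with hf
  have h1 : ∑ k : Fin n, ((if P (σ (lo k)) then 1 else 0) + (if P (σ (hi k)) then 1 else 0))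
      = ∑ k ∈ Finset.range n, (f (2*k) + f (2*k+1)) := by
    rw [← Fin.sum_univ_eq_sum_range (fun k => f (2*k) + f (2*k+1)) n]
    refine Finset.sum_congr rfl fun k _ => ?_
    have h2k : 2*k.1 < 2*n := by have := k.2; omega
    have h2k1 : 2*k.1+1 < 2*n := by have := k.2; omega
    simp only [hf, dif_pos h2k, dif_pos h2k1]
    rfl
  rw [h1, ← sum_range_pair, ← Fin.sum_univ_eq_sum_range f (2*n)]
  have h3 : ∀ i : Fin (2*n), f i.1 = if P (σ i) then 1 else 0 := fun i => by
    simp [hf, i.2]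
  calc ∑ i : Fin (2*n), f i.1 = ∑ i : Fin (2*n), (if P (σ i) then 1 else 0) :=
        Finset.sum_congr rfl fun i _ => h3 i
    _ = ∑ j : Fin (2*n), (if P j then 1 else 0) := Equiv.sum_comp σ (fun j => if P j then 1 else 0)
    _ = _ := (Finset.card_filter _ _).symm

lemma card_filter_lt (m k : ℕ) (hk : k ≤ m) :
    (Finset.univ.filter (fun j : Fin m => (j:ℕ) < k)).card = k := by
  rw [Finset.card_filter]
  rw [Fin.sum_univ_eq_sum_range (fun i => if i < k then 1 else 0) m]
  rw [← Finset.card_filter]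
  have : Finset.filter (fun i => i < k) (Finset.range m) = Finset.range k := by
    ext a; simp only [Finset.mem_filter, Finset.mem_range]; omega
  rw [this, Finset.card_range]

lemma exists_pair (σ : Equiv.Perm (Fin (2*n))) (P : Fin (2*n) → Prop) [DecidablePred P]
    (hcard : n < (Finset.univ.filter P).card) :
    ∃ k : Fin n, P (σ (lo k)) ∧ P (σ (hi k)) := by
  by_contra h
  push_neg at h
  have hle : ∀ k : Fin n,
      ((if P (σ (lo k)) then 1 else 0) + (if P (σ (hi k)) then 1 else 0)) ≤ 1 := by
    intro k
    have := h k
    split_ifs with h1 h2 <;> simp_all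
  have hsum : ∑ k : Fin n, ((if P (σ (lo k)) then 1 else 0) + (if P (σ (hi k)) then 1 else 0))
      ≤ ∑ _k : Fin n, 1 := Finset.sum_le_sum fun k _ => hle k
  rw [pair_count σ P] at hsum
  simp [Finset.card_univ] at hsum
  omega

lemma exists_pair' (σ : Equiv.Perm (Fin (2*n))) (P : Fin (2*n) → Prop) [DecidablePred P]
    (hcard : n ≤ (Finset.univ.filter P).card) (k0 : Fin n)
    (h0 : ¬ P (σ (lo k0)) ∧ ¬ P (σ (hi k0))) :
    ∃ k : Fin n, P (σ (lo k)) ∧ P (σ (hi k)) := by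
  by_contra h
  push_neg at h
  have hle : ∀ k : Fin n,
      ((if P (σ (lo k)) then 1 else 0) + (if P (σ (hi k)) then 1 else 0)) ≤ 1 := by
    intro k
    have := h k
    split_ifs with h1 h2 <;> simp_all
  have hpc := pair_count σ P
  rw [← Finset.add_sum_erase _ _ (Finset.mem_univ k0)] at hpc
  have h1 : ((if P (σ (lo k0)) then 1 else 0) + (if P (σ (hi k0)) then 1 else 0)) = 0 := by
    simp [h0.1, h0.2]
  have h2 : ∑ k ∈ Finset.univ.erase k0,
      ((if P (σ (lo k)) then 1 else 0) + (if P (σ (hi k)) then 1 else 0))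
      ≤ ∑ _k ∈ Finset.univ.erase k0, 1 := Finset.sum_le_sum fun k _ => hle k
  rw [Finset.sum_const, Finset.card_erase_of_mem (Finset.mem_univ k0), Finset.card_univ,
    Fintype.card_fin, smul_eq_mul, mul_one] at h2
  have hk0 := k0.2
  omega

def E (n : ℕ) : Fin n × Fin 2 ≃ Fin (2*n) where
  toFun p := ⟨2*p.1.1 + p.2.1, by have := p.1.2; have := p.2.2; omega⟩
  invFun i := (⟨i.1/2, by have := i.2; omega⟩, ⟨i.1 % 2, by omega⟩)
  left_inv p := by
    ext
    · simp; omega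
    · simp; omega
  right_inv i := by
    ext
    simp; omega

def Fl (s : Fin n → Bool) : Fin n × Fin 2 ≃ Fin n × Fin 2 where
  toFun p := (p.1, if s p.1 then ⟨1 - p.2.1, by omega⟩ else p.2)
  invFun p := (p.1, if s p.1 then ⟨1 - p.2.1, by omega⟩ else p.2)
  left_inv p := by
    cases hs : s p.1 <;> simp [hs] <;> ext <;> simp <;> omega
  right_inv p := by
    cases hs : s p.1 <;> simp [hs] <;> ext <;> simp <;> omega

def B2S (n : ℕ) : Fin n × Fin 2 ≃ Fin n ⊕ Fin n where
  toFun p := if p.2.1 = 0 then Sum.inl p.1 else Sum.inr p.1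
  invFun x := Sum.elim (fun k => (k, (0 : Fin 2))) (fun k => (k, (1 : Fin 2))) x
  left_inv p := by
    rcases p with ⟨k, j⟩
    rcases j with ⟨jv, hj⟩
    interval_cases jv <;> simp
  right_inv x := by rcases x with k | k <;> simp

def D (n : ℕ) : Fin n ⊕ Fin n ≃ Fin (2*n) :=
  finSumFinEquiv.trans (finCongr (by omega))

def Phi (s : Fin n → Bool) (a b : Equiv.Perm (Fin n)) : Equiv.Perm (Fin (2*n)) :=
  (E n).symm.trans ((Fl s).trans ((B2S n).trans ((Equiv.sumCongr a b).trans (D n))))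

lemma Phi_lo (s : Fin n → Bool) (a b : Equiv.Perm (Fin n)) (k : Fin n) :
    ((Phi s a b (lo k)) : ℕ) = if s k then n + (b k).1 else (a k).1 := by
  have h : lo k = E n (k, 0) := by
    apply Fin.ext; simp [E, lo]
  rw [h]
  cases hs : s k <;>
    simp [Phi, Equiv.trans_apply, Fl, hs, B2S, D, finCongr_apply, Nat.add_comm]

lemma Phi_hi (s : Fin n → Bool) (a b : Equiv.Perm (Fin n)) (k : Fin n) :
    ((Phi s a b (hi k)) : ℕ) = if s k then (a k).1 else n + (b k).1 := by
  have h : hi k = E n (k, 1) := by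
    apply Fin.ext; simp [E, hi]
  rw [h]
  cases hs : s k <;>
    simp [Phi, Equiv.trans_apply, Fl, hs, B2S, D, finCongr_apply, Nat.add_comm]

def Mixed (n : ℕ) (σ : Equiv.Perm (Fin (2*n))) : Prop :=
  ∀ k : Fin n, (((σ (lo k)) : ℕ) < n ↔ ¬ (((σ (hi k)) : ℕ) < n))

instance (n : ℕ) : DecidablePred (Mixed n) := fun σ => by
  unfold Mixed; infer_instance

lemma Phi_mixed (s : Fin n → Bool) (a b : Equiv.Perm (Fin n)) : Mixed n (Phi s a b) := by
  intro k
  have hlo := Phi_lo s a b k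
  have hhi := Phi_hi s a b k
  have ha := (a k).2
  have hb := (b k).2
  cases hs : s k <;> rw [hs] at hlo hhi <;> simp at hlo hhi <;> omega

lemma Phi_injective : Function.Injective
    (fun t : (Fin n → Bool) × Equiv.Perm (Fin n) × Equiv.Perm (Fin n) =>
      Phi t.1 t.2.1 t.2.2) := by
  rintro ⟨s, a, b⟩ ⟨s', a', b'⟩ h
  simp only at h
  have hlo : ∀ k : Fin n, ((Phi s a b (lo k)) : ℕ) = ((Phi s' a' b' (lo k)) : ℕ) := by
    intro k; rw [h]
  have hhi : ∀ k : Fin n, ((Phi s a b (hi k)) : ℕ) = ((Phi s' a' b' (hi k)) : ℕ) := by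
    intro k; rw [h]
  have hs : s = s' := by
    funext k
    have h1 := hlo k
    rw [Phi_lo, Phi_lo] at h1
    have ha := (a k).2
    have ha' := (a' k).2
    cases hsk : s k <;> cases hsk' : s' k <;> rw [hsk, hsk'] at h1 <;> simp at h1 ⊢ <;> omega
  subst hs
  have hab : a = a' ∧ b = b' := by
    constructor <;> [skip; skip] <;> ext k
    · have h1 := hlo k
      have h2 := hhi k
      rw [Phi_lo, Phi_lo] at h1
      rw [Phi_hi, Phi_hi] at h2
      cases hsk : s k <;> rw [hsk] at h1 h2 <;> simp at h1 h2 <;> omega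
    · have h1 := hlo k
      have h2 := hhi k
      rw [Phi_lo, Phi_lo] at h1
      rw [Phi_hi, Phi_hi] at h2
      cases hsk : s k <;> rw [hsk] at h1 h2 <;> simp at h1 h2 <;> omega
  rw [hab.1, hab.2]

lemma Phi_surjective (σ : Equiv.Perm (Fin (2*n))) (hσ : Mixed n σ) :
    ∃ s a b, Phi s a b = σ := by
  classical
  -- s k = true iff the η-slot (value < n) is the odd slot
  set s : Fin n → Bool := fun k => decide (¬ ((σ (lo k) : ℕ) < n)) with hs
  have hlo_lt : ∀ k : Fin n, s k = false → ((σ (lo k)) : ℕ) < n := by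
    intro k hk; simpa [hs] using hk
  have hlo_ge : ∀ k : Fin n, s k = true → ¬ ((σ (lo k)) : ℕ) < n := by
    intro k hk; simpa [hs] using hk
  have hhi_lt : ∀ k : Fin n, s k = true → ((σ (hi k)) : ℕ) < n := by
    intro k hk
    have h1 := hσ k
    have h2 := hlo_ge k hk
    tauto
  have hhi_ge : ∀ k : Fin n, s k = false → ¬ ((σ (hi k)) : ℕ) < n := by
    intro k hk
    have h1 := hσ k
    have h2 := hlo_lt k hk
    tauto
  have hsndlt : ∀ k : Fin n, (σ (hi k) : ℕ) < 2*n := fun k => (σ (hi k)).2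
  have hfstlt : ∀ k : Fin n, (σ (lo k) : ℕ) < 2*n := fun k => (σ (lo k)).2
  set a0 : Fin n → Fin n := fun k =>
    if h : (σ (lo k) : ℕ) < n then ⟨(σ (lo k) : ℕ), h⟩
    else ⟨(σ (hi k) : ℕ), hhi_lt k (by simp [hs]; omega)⟩ with ha0
  set b0 : Fin n → Fin n := fun k =>
    if (σ (lo k) : ℕ) < n then ⟨(σ (hi k) : ℕ) - n, by have := hsndlt k; omega⟩
    else ⟨(σ (lo k) : ℕ) - n, by have := hfstlt k; omega⟩ with hb0
  have keyk : ∀ (u u' : Fin n → Fin (2*n)), (∀ k, (u k : ℕ) = 2*k.1 ∨ (u k : ℕ) = 2*k.1+1) →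
      ∀ k k', σ (u k) = σ (u' k') → True := fun _ _ _ _ _ _ => trivial
  have ha0inj : Function.Injective a0 := by
    intro k k' hkk
    simp only [ha0] at hkk
    by_cases h1 : (σ (lo k) : ℕ) < n <;> by_cases h2 : (σ (lo k') : ℕ) < n
    · rw [dif_pos h1, dif_pos h2] at hkk
      rw [Fin.mk.injEq] at hkk
      have hv : (σ (lo k) : ℕ) = (σ (lo k') : ℕ) := hkk
      have h3 := σ.injective (Fin.ext hv)
      have h4 := congrArg Fin.val h3
      simp only [lo] at h4
      exact Fin.ext (by omega)
    · rw [dif_pos h1, dif_neg h2] at hkk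
      rw [Fin.mk.injEq] at hkk
      have hv : (σ (lo k) : ℕ) = (σ (hi k') : ℕ) := hkk
      have h3 := σ.injective (Fin.ext hv)
      have h4 := congrArg Fin.val h3
      simp only [lo, hi] at h4
      omega
    · rw [dif_neg h1, dif_pos h2] at hkk
      rw [Fin.mk.injEq] at hkk
      have hv : (σ (hi k) : ℕ) = (σ (lo k') : ℕ) := hkk
      have h3 := σ.injective (Fin.ext hv)
      have h4 := congrArg Fin.val h3
      simp only [lo, hi] at h4
      omega
    · rw [dif_neg h1, dif_neg h2] at hkk
      rw [Fin.mk.injEq] at hkk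
      have hv : (σ (hi k) : ℕ) = (σ (hi k') : ℕ) := hkk
      have h3 := σ.injective (Fin.ext hv)
      have h4 := congrArg Fin.val h3
      simp only [hi] at h4
      exact Fin.ext (by omega)
  have hb0inj : Function.Injective b0 := by
    intro k k' hkk
    simp only [hb0] at hkk
    by_cases h1 : (σ (lo k) : ℕ) < n <;> by_cases h2 : (σ (lo k') : ℕ) < n
    · rw [if_pos h1, if_pos h2] at hkk
      have h5 : (σ (hi k) : ℕ) = (σ (hi k') : ℕ) := by
        rw [Fin.mk.injEq] at hkk
        have h4 : ((σ (hi k) : ℕ) - n) = ((σ (hi k') : ℕ) - n) := hkk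
        have := hhi_ge k (by simp [hs, h1])
        have := hhi_ge k' (by simp [hs, h2])
        omega
      have h3 := σ.injective (Fin.ext h5 : σ (hi k) = σ (hi k'))
      have h4 := congrArg Fin.val h3
      simp only [hi] at h4
      exact Fin.ext (by omega)
    · rw [if_pos h1, if_neg h2] at hkk
      have h5 : (σ (hi k) : ℕ) = (σ (lo k') : ℕ) := by
        rw [Fin.mk.injEq] at hkk
        have h4 : ((σ (hi k) : ℕ) - n) = ((σ (lo k') : ℕ) - n) := hkk
        have := hhi_ge k (by simp [hs, h1])
        omega
      have h3 := σ.injective (Fin.ext h5 : σ (hi k) = σ (lo k'))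
      have h4 := congrArg Fin.val h3
      simp only [lo, hi] at h4
      omega
    · rw [if_neg h1, if_pos h2] at hkk
      have h5 : (σ (lo k) : ℕ) = (σ (hi k') : ℕ) := by
        rw [Fin.mk.injEq] at hkk
        have h4 : ((σ (lo k) : ℕ) - n) = ((σ (hi k') : ℕ) - n) := hkk
        have := hhi_ge k' (by simp [hs, h2])
        omega
      have h3 := σ.injective (Fin.ext h5 : σ (lo k) = σ (hi k'))
      have h4 := congrArg Fin.val h3
      simp only [lo, hi] at h4
      omega
    · rw [if_neg h1, if_neg h2] at hkk
      have h5 : (σ (lo k) : ℕ) = (σ (lo k') : ℕ) := by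
        rw [Fin.mk.injEq] at hkk
        have h4 : ((σ (lo k) : ℕ) - n) = ((σ (lo k') : ℕ) - n) := hkk
        omega
      have h3 := σ.injective (Fin.ext h5 : σ (lo k) = σ (lo k'))
      have h4 := congrArg Fin.val h3
      simp only [lo] at h4
      exact Fin.ext (by omega)
  refine ⟨s, Equiv.ofBijective a0 (Finite.injective_iff_bijective.mp ha0inj),
    Equiv.ofBijective b0 (Finite.injective_iff_bijective.mp hb0inj), ?_⟩
  apply Equiv.ext
  intro i
  have hi2 : i.1 < 2*n := i.2
  set k : Fin n := ⟨i.1/2, by omega⟩ with hk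
  have hio : i = lo k ∨ i = hi k := by
    have h2 : 2*(i.1/2) = i.1 ∨ 2*(i.1/2)+1 = i.1 := by omega
    rcases h2 with h2 | h2
    · exact Or.inl (Fin.ext (show i.1 = 2*(i.1/2) from h2.symm))
    · exact Or.inr (Fin.ext (show i.1 = 2*(i.1/2)+1 from h2.symm))
  have happlo : ((Phi s (Equiv.ofBijective a0 (Finite.injective_iff_bijective.mp ha0inj))
      (Equiv.ofBijective b0 (Finite.injective_iff_bijective.mp hb0inj)) (lo k)) : ℕ)
      = if s k then n + (b0 k).1 else (a0 k).1 := Phi_lo _ _ _ k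
  have happhi : ((Phi s (Equiv.ofBijective a0 (Finite.injective_iff_bijective.mp ha0inj))
      (Equiv.ofBijective b0 (Finite.injective_iff_bijective.mp hb0inj)) (hi k)) : ℕ)
      = if s k then (a0 k).1 else n + (b0 k).1 := Phi_hi _ _ _ k
  rcases hio with hio | hio <;> rw [hio]
  · apply Fin.ext
    rw [happlo]
    cases hsk : s k
    · have h1 := hlo_lt k hsk
      simp [ha0, dif_pos h1]
    · have h1 := hlo_ge k hsk
      simp [hb0, if_neg h1]
      have := hfstlt k
      omega
  · apply Fin.ext
    rw [happhi]
    cases hsk : s k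
    · have h1 := hlo_lt k hsk
      have h2 := hhi_ge k hsk
      simp [hb0, if_pos h1]
      have := hsndlt k
      omega
    · have h1 := hlo_ge k hsk
      simp [ha0, dif_neg h1]

lemma card_mixed (n : ℕ) :
    (Finset.univ.filter (Mixed n)).card = n.factorial * n.factorial * 2^n := by
  classical
  have h := Finset.card_bij
    (fun (t : (Fin n → Bool) × Equiv.Perm (Fin n) × Equiv.Perm (Fin n)) (_ : t ∈ Finset.univ) =>
      Phi t.1 t.2.1 t.2.2)
    (fun t _ => Finset.mem_filter.mpr ⟨Finset.mem_univ _, Phi_mixed t.1 t.2.1 t.2.2⟩)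
    (fun t _ t' _ h => Phi_injective h)
    (fun σ hσ => by
      have hm : Mixed n σ := (Finset.mem_filter.mp hσ).2
      obtain ⟨s, a, b, hab⟩ := Phi_surjective σ hm
      exact ⟨(s, a, b), Finset.mem_univ _, hab⟩)
  rw [← h, Finset.card_univ]
  simp [Fintype.card_perm]
  ring


end ParabolicAux

open ParabolicAux in
/-- **Powers of a parabolic class in the Fujiki form.**  Let `F` be the Fujiki-type
symmetric `2n`-multilinear form `F(x) = (1/(2n)!) Σ_σ Π_k q(x_{σ(2k-1)}, x_{σ(2k)})`,
the polarization of `v ↦ q(v,v)ⁿ`, and let `η` satisfy `q(η,η) = 0`.  Then `F`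
vanishes on any tuple containing `η` at least `n+1` times, while
`F(η,...,η, ρ,...,ρ)` (each `n` times) equals `q(η,ρ)ⁿ · n!·n!·2ⁿ/(2n)!`, which is
nonzero whenever `q(η,ρ) ≠ 0`. -/
theorem parabolic_powers_fujiki (V : Type*) [AddCommGroup V] [Module ℝ V]
    (n : ℕ) (hn : 1 ≤ n)
    (q : V →ₗ[ℝ] V →ₗ[ℝ] ℝ) (hq : ∀ a b : V, q a b = q b a)
    (F : (Fin (2 * n) → V) → ℝ)
    (hF : ∀ x : Fin (2 * n) → V,
      F x = (1 / (Nat.factorial (2 * n) : ℝ)) *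
        ∑ σ : Equiv.Perm (Fin (2 * n)), ∏ k : Fin n,
          q (x (σ ⟨2 * k.1, by have := k.2; omega⟩))
            (x (σ ⟨2 * k.1 + 1, by have := k.2; omega⟩)))
    (η : V) (hiso : q η η = 0) :
    (∀ ρ : Fin (n - 1) → V,
      F (fun i => if h : (i : ℕ) < n + 1 then η
          else ρ ⟨(i : ℕ) - (n + 1), by have := i.2; omega⟩) = 0) ∧
    (∀ ρ : V,
      F (fun i => if (i : ℕ) < n then η else ρ) =
        q η ρ ^ n * ((n.factorial * n.factorial * 2 ^ n : ℕ) : ℝ) /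
          (Nat.factorial (2 * n) : ℝ) ∧
      (q η ρ ≠ 0 → F (fun i => if (i : ℕ) < n then η else ρ) ≠ 0)) := by
  classical
  constructor
  · -- vanishing with n+1 copies of η
    intro ρ
    rw [hF]
    refine mul_eq_zero_of_right _ (Finset.sum_eq_zero fun σ _ => ?_)
    obtain ⟨k, hk1, hk2⟩ := exists_pair σ (fun j : Fin (2*n) => (j : ℕ) < n + 1)
      (by rw [card_filter_lt (2*n) (n+1) (by omega)]; omega)
    refine Finset.prod_eq_zero (Finset.mem_univ k) ?_
    have h1 : ((σ ⟨2 * k.1, by have := k.2; omega⟩ : Fin (2*n)) : ℕ) < n + 1 := hk1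
    have h2 : ((σ ⟨2 * k.1 + 1, by have := k.2; omega⟩ : Fin (2*n)) : ℕ) < n + 1 := hk2
    rw [dif_pos h1, dif_pos h2, hiso]
  · -- the value on η,…,η,ρ,…,ρ
    intro ρ
    have key : F (fun i => if (i : ℕ) < n then η else ρ) =
        q η ρ ^ n * ((n.factorial * n.factorial * 2 ^ n : ℕ) : ℝ) /
          (Nat.factorial (2 * n) : ℝ) := by
      rw [hF]
      have hterm : ∀ σ : Equiv.Perm (Fin (2*n)),
          σ ∈ (Finset.univ : Finset (Equiv.Perm (Fin (2*n)))) →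
          (∏ k : Fin n,
            q (if ((σ ⟨2 * k.1, by have := k.2; omega⟩ : Fin (2*n)) : ℕ) < n then η else ρ)
              (if ((σ ⟨2 * k.1 + 1, by have := k.2; omega⟩ : Fin (2*n)) : ℕ) < n then η else ρ))
          = if Mixed n σ then q η ρ ^ n else 0 := by
        intro σ _
        by_cases hm : Mixed n σ
        · rw [if_pos hm]
          have hfac : ∀ k : Fin n,
              (q (if ((σ (lo k) : Fin (2*n)) : ℕ) < n then η else ρ)
                (if ((σ (hi k) : Fin (2*n)) : ℕ) < n then η else ρ)) = q η ρ := by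
            intro k
            have hmk := hm k
            by_cases h1 : ((σ (lo k)) : ℕ) < n
            · rw [if_pos h1, if_neg (hmk.mp h1)]
            · rw [if_neg h1, if_pos (by tauto), hq]
          exact (Finset.prod_congr rfl fun k _ => hfac k).trans
            (by simp [Finset.prod_const])
        · rw [if_neg hm]
          have hzero : ∃ k : Fin n, ((σ (lo k)) : ℕ) < n ∧ ((σ (hi k)) : ℕ) < n := by
            have hm' : ∃ k0 : Fin n, ¬ (((σ (lo k0)) : ℕ) < n ↔ ¬ ((σ (hi k0)) : ℕ) < n) := by
              by_contra hcon
              push_neg at hcon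
              refine hm fun k => ?_
              have h3 := hcon k
              exact ⟨fun h => by have := h3.mp h; omega, fun h => h3.mpr (by omega)⟩
            obtain ⟨k0, hk0⟩ := hm'
            by_cases h1 : ((σ (lo k0)) : ℕ) < n <;> by_cases h2 : ((σ (hi k0)) : ℕ) < n
            · exact ⟨k0, h1, h2⟩
            · exact absurd (iff_of_true h1 h2) hk0
            · exact absurd (iff_of_false h1 (not_not_intro h2)) hk0
            · exact exists_pair' σ (fun j : Fin (2*n) => (j : ℕ) < n)
                (by rw [card_filter_lt (2*n) n (by omega)]) k0 ⟨h1, h2⟩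
          obtain ⟨k, hk1, hk2⟩ := hzero
          refine Finset.prod_eq_zero (Finset.mem_univ k) ?_
          have h1 : ((σ ⟨2 * k.1, by have := k.2; omega⟩ : Fin (2*n)) : ℕ) < n := hk1
          have h2 : ((σ ⟨2 * k.1 + 1, by have := k.2; omega⟩ : Fin (2*n)) : ℕ) < n := hk2
          rw [if_pos h1, if_pos h2, hiso]
      rw [Finset.sum_congr rfl hterm, Finset.sum_ite, Finset.sum_const, Finset.sum_const_zero,
        add_zero]
      have hcm : (Finset.univ.filter (fun σ : Equiv.Perm (Fin (2*n)) => Mixed n σ)).card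
          = n.factorial * n.factorial * 2 ^ n := card_mixed n
      rw [hcm, nsmul_eq_mul]
      push_cast
      ring
    refine ⟨key, fun hne => ?_⟩
    rw [key]
    have h1 : ((n.factorial * n.factorial * 2 ^ n : ℕ) : ℝ) ≠ 0 := by
      have : 0 < n.factorial * n.factorial * 2 ^ n :=
        Nat.mul_pos (Nat.mul_pos n.factorial_pos n.factorial_pos) (Nat.pow_pos (by omega))
      exact_mod_cast this.ne'
    have h2 : ((Nat.factorial (2 * n) : ℝ)) ≠ 0 := by
      exact_mod_cast (Nat.factorial_pos (2*n)).ne'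
    exact div_ne_zero (mul_ne_zero (pow_ne_zero _ hne) h1) h2
end
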